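/- arXiv:2102.03562 — 7 statements merged into one kernel-verified Lean document; each statement's English description precedes it below -/
import Mathlib

section
/- Assume ⟨·,·⟩ is nondegenerate on g and g = l + σ(l) (every element of g is of the form Y + σ(Z) with Y, Z ∈ l). Then for every ν ∈ ℝ and every X ∈ l(ν), one has [X, σX] = 0; consequently, for ν ≠ 1, also [ρ⁺(X), ρ⁻(X)] = 0. -/
/-- Assume `⟨·,·⟩` is nondegenerate on `g` and `g = l + σ(l)`. Then for every
`ν ∈ ℝ` and every `X ∈ l(ν)` one has `[X, σX] = 0`; consequently, for `ν ≠ 1`, also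
`[ρ⁺(X), ρ⁻(X)] = 0`, where `ρ±(X) = (d_ν/2)(X ± σX)` and `d_ν = ((1−ν)/2)^(−1/2)`. -/
theorem statement6
    {g : Type*} [LieRing g] [LieAlgebra ℝ g] [FiniteDimensional ℝ g]
    (B : LinearMap.BilinForm ℝ g)
    (hBsymm : ∀ X Y : g, B X Y = B Y X)
    (hBinv : ∀ X Y Z : g, B ⁅X, Y⁆ Z = - B Y ⁅X, Z⁆)
    (σ : g →ₗ[ℝ] g)
    (hσbr : ∀ X Y : g, σ ⁅X, Y⁆ = ⁅σ X, σ Y⁆)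
    (hσinv : ∀ X : g, σ (σ X) = X)
    (hσB : ∀ X Y : g, B (σ X) (σ Y) = B X Y)
    (l : LieSubalgebra ℝ g)
    (hBnondeg : ∀ X : g, (∀ Y : g, B X Y = 0) → X = 0)
    (hdec : ∀ X : g, ∃ Y ∈ l, ∃ Z ∈ l, X = Y + σ Z) :
    ∀ (ν : ℝ) (X : g), X ∈ l → (∀ Y ∈ l, B (σ X) Y = ν * B X Y) →
      ⁅X, σ X⁆ = (0 : g) ∧
      (ν ≠ 1 →
        ⁅((((1 - ν) / 2) ^ (-(1/2) : ℝ) / 2 : ℝ)) • (X + σ X),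
          ((((1 - ν) / 2) ^ (-(1/2) : ℝ) / 2 : ℝ)) • (X - σ X)⁆ = (0 : g)) := by
  intro ν X hX hνX
  have hXX : ∀ Y ∈ l, B ⁅X, σ X⁆ Y = 0 := by
    intro Y hY
    have h1 : B ⁅X, σ X⁆ Y = - B (σ X) ⁅X, Y⁆ := hBinv _ _ _
    have h2 : B (σ X) ⁅X, Y⁆ = ν * B X ⁅X, Y⁆ := hνX _ (l.lie_mem hX hY)
    have h3 : B X ⁅X, Y⁆ = 0 := by
      have h4 := hBinv X X Y
      rw [lie_self] at h4
      simp at h4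
      linarith
    rw [h1, h2, h3, mul_zero, neg_zero]
  have hσbrX : σ ⁅X, σ X⁆ = - ⁅X, σ X⁆ := by
    rw [hσbr, hσinv, ← lie_skew]
  have key : ⁅X, σ X⁆ = 0 := by
    apply hBnondeg
    intro W
    obtain ⟨Y, hY, Z, hZ, rfl⟩ := hdec W
    have hA := hXX Y hY
    have hB2 : B ⁅X, σ X⁆ (σ Z) = 0 := by
      have h5 : B ⁅X, σ X⁆ (σ Z) = B (σ (σ ⁅X, σ X⁆)) (σ Z) := by rw [hσinv]
      rw [h5, hσB, hσbrX]
      simp only [map_neg, LinearMap.neg_apply, neg_eq_zero]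
      exact hXX Z hZ
    rw [map_add, hA, hB2, add_zero]
  refine ⟨key, fun _ => ?_⟩
  have key2 : ⁅σ X, X⁆ = 0 := by rw [← lie_skew, key, neg_zero]
  simp [lie_smul, smul_lie, lie_add, add_lie, lie_sub, sub_lie, key, key2]
end

section
/- For X ∈ l(ν), Y ∈ l(ν') and Z ∈ l(ν''), one has ω(X + σX, Y − σY, Z − σZ) = 2(1 + ν − ν' − ν'')·ω(X, Y, Z), where ω(A,B,C) := ⟨[A,B],C⟩. -/
/-- For `X ∈ l(ν)`, `Y ∈ l(ν')` and `Z ∈ l(ν'')`, one has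
`ω(X + σX, Y − σY, Z − σZ) = 2(1 + ν − ν' − ν'')·ω(X, Y, Z)`,
where `ω(A,B,C) = ⟨[A,B],C⟩`. -/
theorem statement10
    {g : Type*} [LieRing g] [LieAlgebra ℝ g] [FiniteDimensional ℝ g]
    (B : LinearMap.BilinForm ℝ g)
    (hBsymm : ∀ X Y : g, B X Y = B Y X)
    (hBinv : ∀ X Y Z : g, B ⁅X, Y⁆ Z = - B Y ⁅X, Z⁆)
    (σ : g →ₗ[ℝ] g)
    (hσbr : ∀ X Y : g, σ ⁅X, Y⁆ = ⁅σ X, σ Y⁆)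
    (hσinv : ∀ X : g, σ (σ X) = X)
    (hσB : ∀ X Y : g, B (σ X) (σ Y) = B X Y)
    (l : LieSubalgebra ℝ g)
    (ν ν' ν'' : ℝ) (X Y Z : g)
    (hXl : X ∈ l) (hXν : ∀ W ∈ l, B (σ X) W = ν * B X W)
    (hYl : Y ∈ l) (hYν : ∀ W ∈ l, B (σ Y) W = ν' * B Y W)
    (hZl : Z ∈ l) (hZν : ∀ W ∈ l, B (σ Z) W = ν'' * B Z W) :
    B ⁅X + σ X, Y - σ Y⁆ (Z - σ Z) = 2 * (1 + ν - ν' - ν'') * B ⁅X, Y⁆ Z := by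
  have hXY : (⁅X, Y⁆ : g) ∈ l := l.lie_mem hXl hYl
  have hXZ : (⁅X, Z⁆ : g) ∈ l := l.lie_mem hXl hZl
  have hYZ : (⁅Y, Z⁆ : g) ∈ l := l.lie_mem hYl hZl
  -- basic reduction: B X ⁅Y,Z⁆ = B ⁅X,Y⁆ Z
  have hXYZ : B X ⁅Y, Z⁆ = B ⁅X, Y⁆ Z := by
    have h1 := hBinv Y X Z
    rw [show (⁅Y, X⁆ : g) = -⁅X, Y⁆ by rw [← lie_skew X Y, neg_neg], map_neg,
      LinearMap.neg_apply] at h1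
    linarith
  have h1 : B ⁅X, Y⁆ (σ Z) = ν'' * B ⁅X, Y⁆ Z := by
    rw [hBsymm ⁅X, Y⁆ (σ Z), hZν _ hXY, hBsymm Z ⁅X, Y⁆]
  have h2 : B ⁅X, σ Y⁆ Z = ν' * B ⁅X, Y⁆ Z := by
    rw [hBinv X (σ Y) Z, hYν _ hXZ, hBinv X Y Z]; ring
  have h3 : B ⁅σ X, Y⁆ Z = ν * B ⁅X, Y⁆ Z := by
    have : B ⁅σ X, Y⁆ Z = B (σ X) ⁅Y, Z⁆ := by
      have h1 := hBinv Y (σ X) Z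
      rw [show (⁅Y, σ X⁆ : g) = -⁅σ X, Y⁆ by rw [← lie_skew (σ X) Y, neg_neg], map_neg,
        LinearMap.neg_apply] at h1
      linarith
    rw [this, hXν _ hYZ, hXYZ]
  have h7 : B ⁅σ X, σ Y⁆ (σ Z) = B ⁅X, Y⁆ Z := by
    rw [← hσbr, hσB]
  have h4 : B ⁅X, σ Y⁆ (σ Z) = ν * B ⁅X, Y⁆ Z := by
    have : (⁅X, σ Y⁆ : g) = σ ⁅σ X, Y⁆ := by rw [hσbr, hσinv]
    rw [this, hσB, h3]
  have h5 : B ⁅σ X, Y⁆ (σ Z) = ν' * B ⁅X, Y⁆ Z := by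
    have : (⁅σ X, Y⁆ : g) = σ ⁅X, σ Y⁆ := by rw [hσbr, hσinv]
    rw [this, hσB, h2]
  have h6 : B ⁅σ X, σ Y⁆ Z = ν'' * B ⁅X, Y⁆ Z := by
    have : B ⁅σ X, σ Y⁆ Z = B ⁅X, Y⁆ (σ Z) := by
      rw [← hσbr, ← hσB ⁅X, Y⁆ (σ Z), hσinv]
    rw [this, h1]
  simp only [add_lie, lie_sub, map_add, map_sub, LinearMap.add_apply, LinearMap.sub_apply]
  rw [h1, h2, h3, h4, h5, h6, h7]
  ring
end

section
/- For all ν, ν', ν'' ≠ 1 and all X ∈ l(ν), Y ∈ l(ν'), Z ∈ l(ν''), one has ω(ρ⁺(X), ρ⁻(Y), ρ⁻(Z)) = (1/4)·d_ν·d_{ν'}·d_{ν''}·(1 + ν − ν' − ν'')·ω(X, Y, Z), where ω(A,B,C) := ⟨[A,B],C⟩. -/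
/-- For all `ν, ν', ν'' ≠ 1` and all `X ∈ l(ν)`, `Y ∈ l(ν')`, `Z ∈ l(ν'')`,
one has `ω(ρ⁺(X), ρ⁻(Y), ρ⁻(Z)) = (1/4)·d_ν·d_{ν'}·d_{ν''}·(1 + ν − ν' − ν'')·ω(X, Y, Z)`,
where `ω(A,B,C) = ⟨[A,B],C⟩`, `d_ν = ((1−ν)/2)^(−1/2)`, `ρ⁺(X) = (d_ν/2)(X + σX)` and
`ρ⁻(X) = (d_ν/2)(X − σX)`. -/
theorem statement11
    {g : Type*} [LieRing g] [LieAlgebra ℝ g] [FiniteDimensional ℝ g]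
    (B : LinearMap.BilinForm ℝ g)
    (hBsymm : ∀ X Y : g, B X Y = B Y X)
    (hBinv : ∀ X Y Z : g, B ⁅X, Y⁆ Z = - B Y ⁅X, Z⁆)
    (σ : g →ₗ[ℝ] g)
    (hσbr : ∀ X Y : g, σ ⁅X, Y⁆ = ⁅σ X, σ Y⁆)
    (hσinv : ∀ X : g, σ (σ X) = X)
    (hσB : ∀ X Y : g, B (σ X) (σ Y) = B X Y)
    (l : LieSubalgebra ℝ g)
    (ν ν' ν'' : ℝ) (hν : ν ≠ 1) (hν' : ν' ≠ 1) (hν'' : ν'' ≠ 1)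
    (X Y Z : g)
    (hXl : X ∈ l) (hXν : ∀ W ∈ l, B (σ X) W = ν * B X W)
    (hYl : Y ∈ l) (hYν : ∀ W ∈ l, B (σ Y) W = ν' * B Y W)
    (hZl : Z ∈ l) (hZν : ∀ W ∈ l, B (σ Z) W = ν'' * B Z W) :
    B ⁅((((1 - ν) / 2) ^ (-(1/2) : ℝ) / 2 : ℝ)) • (X + σ X),
        ((((1 - ν') / 2) ^ (-(1/2) : ℝ) / 2 : ℝ)) • (Y - σ Y)⁆
      (((((1 - ν'') / 2) ^ (-(1/2) : ℝ) / 2 : ℝ)) • (Z - σ Z))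
    = 1 / 4 * (((1 - ν) / 2) ^ (-(1/2) : ℝ)) * (((1 - ν') / 2) ^ (-(1/2) : ℝ))
        * (((1 - ν'') / 2) ^ (-(1/2) : ℝ)) * (1 + ν - ν' - ν'') * B ⁅X, Y⁆ Z := by

  have σswap : ∀ A W : g, B (σ A) W = B A (σ W) := fun A W => by
    rw [← hσB A (σ W), hσinv]
  have cyc : ∀ A C D : g, B ⁅A, C⁆ D = B A ⁅C, D⁆ := fun A C D => by
    calc B ⁅A, C⁆ D = B D ⁅A, C⁆ := hBsymm _ _
      _ = B ⁅C, D⁆ A := by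
          have h := hBinv C D A
          rw [← lie_skew C A, map_neg] at h
          linarith
      _ = B A ⁅C, D⁆ := hBsymm _ _
  have h1 : B ⁅σ X, Y⁆ Z = ν * B ⁅X, Y⁆ Z := by
    rw [cyc, cyc, hXν _ (l.lie_mem hYl hZl)]
  have h2 : B ⁅X, σ Y⁆ Z = ν' * B ⁅X, Y⁆ Z := by
    rw [hBinv, hYν _ (l.lie_mem hXl hZl), hBinv X Y Z]; ring
  have h3 : B ⁅X, Y⁆ (σ Z) = ν'' * B ⁅X, Y⁆ Z := by
    rw [hBsymm, hZν _ (l.lie_mem hXl hYl), hBsymm]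
  have h12 : B ⁅σ X, σ Y⁆ Z = ν'' * B ⁅X, Y⁆ Z := by
    rw [← hσbr, σswap, h3]
  have e13 : ⁅σ X, Y⁆ = σ ⁅X, σ Y⁆ := by rw [hσbr, hσinv]
  have h13 : B ⁅σ X, Y⁆ (σ Z) = ν' * B ⁅X, Y⁆ Z := by
    rw [e13, hσB, h2]
  have e23 : ⁅X, σ Y⁆ = σ ⁅σ X, Y⁆ := by rw [hσbr, hσinv]
  have h23 : B ⁅X, σ Y⁆ (σ Z) = ν * B ⁅X, Y⁆ Z := by
    rw [e23, hσB, h1]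
  have h123 : B ⁅σ X, σ Y⁆ (σ Z) = B ⁅X, Y⁆ Z := by
    rw [← hσbr, hσB]
  have core : B ⁅X + σ X, Y - σ Y⁆ (Z - σ Z)
      = (2 + 2*ν - 2*ν' - 2*ν'') * B ⁅X, Y⁆ Z := by
    simp only [lie_add, add_lie, lie_sub, sub_lie, map_add, map_sub,
      LinearMap.add_apply, LinearMap.sub_apply]
    rw [h1, h2, h3, h12, h13, h23, h123]
    ring
  simp only [smul_lie, lie_smul, map_smul, LinearMap.smul_apply, smul_eq_mul]
  rw [core]
  ring
end

section
/- For all X, Z ∈ l(0) and Y ∈ l(−1), one has ⟨[ρ⁺(X), ρ⁻(Y)], ρ⁻(Z)⟩ = ⟨[X, Y], Z⟩. -/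
/-- For all `X, Z ∈ l(0)` and `Y ∈ l(−1)`, one has
`⟨[ρ⁺(X), ρ⁻(Y)], ρ⁻(Z)⟩ = ⟨[X, Y], Z⟩`, where for `X ∈ l(ν)` (`ν ≠ 1`),
`ρ⁺(X) = (d_ν/2)(X + σX)` and `ρ⁻(X) = (d_ν/2)(X − σX)` with `d_ν = ((1−ν)/2)^(−1/2)`
(so `d_0 = √2` and `d_{−1} = 1`). -/
theorem statement12
    {g : Type*} [LieRing g] [LieAlgebra ℝ g] [FiniteDimensional ℝ g]
    (B : LinearMap.BilinForm ℝ g)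
    (hBsymm : ∀ X Y : g, B X Y = B Y X)
    (hBinv : ∀ X Y Z : g, B ⁅X, Y⁆ Z = - B Y ⁅X, Z⁆)
    (σ : g →ₗ[ℝ] g)
    (hσbr : ∀ X Y : g, σ ⁅X, Y⁆ = ⁅σ X, σ Y⁆)
    (hσinv : ∀ X : g, σ (σ X) = X)
    (hσB : ∀ X Y : g, B (σ X) (σ Y) = B X Y)
    (l : LieSubalgebra ℝ g)
    (X Y Z : g)
    (hXl : X ∈ l) (hXν : ∀ W ∈ l, B (σ X) W = 0 * B X W)
    (hYl : Y ∈ l) (hYν : ∀ W ∈ l, B (σ Y) W = (-1) * B Y W)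
    (hZl : Z ∈ l) (hZν : ∀ W ∈ l, B (σ Z) W = 0 * B Z W) :
    B ⁅((((1 - 0) / 2 : ℝ) ^ (-(1/2) : ℝ) / 2 : ℝ)) • (X + σ X),
        ((((1 - (-1)) / 2 : ℝ) ^ (-(1/2) : ℝ) / 2 : ℝ)) • (Y - σ Y)⁆
      (((((1 - 0) / 2 : ℝ) ^ (-(1/2) : ℝ) / 2 : ℝ)) • (Z - σ Z))
    = B ⁅X, Y⁆ Z := by
  have hXYl : ⁅X, Y⁆ ∈ l := l.lie_mem hXl hYl
  have hXZl : ⁅X, Z⁆ ∈ l := l.lie_mem hXl hZl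
  have hZYl : ⁅Z, Y⁆ ∈ l := l.lie_mem hZl hYl
  have hσXY : σ ⁅σ X, Y⁆ = ⁅X, σ Y⁆ := by rw [hσbr, hσinv]
  have hσXY' : σ ⁅X, σ Y⁆ = ⁅σ X, Y⁆ := by rw [hσbr, hσinv]
  have h2 : B ⁅X, Y⁆ (σ Z) = 0 := by
    rw [hBsymm, hZν _ hXYl, zero_mul]
  have h7 : B (σ ⁅X, Y⁆) Z = 0 := by
    rw [← hσinv Z, hσB]; exact h2
  have h8 : B (σ ⁅X, Y⁆) (σ Z) = B ⁅X, Y⁆ Z := hσB _ _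
  have h3 : B ⁅X, σ Y⁆ Z = - B ⁅X, Y⁆ Z := by
    rw [hBinv, hYν _ hXZl, hBinv X Y Z]; ring
  have h5 : B ⁅σ X, Y⁆ Z = 0 := by
    have hz : B ⁅Z, σ X⁆ Y = 0 := by
      rw [hBinv, hXν _ hZYl, zero_mul, neg_zero]
    have hanti : (⁅σ X, Z⁆ : g) = - ⁅Z, σ X⁆ := by rw [← lie_skew]
    rw [hBinv, hanti, map_neg, hBsymm, hz]
    simp
  have h4 : B ⁅X, σ Y⁆ (σ Z) = 0 := by
    rw [← hσXY, hσB, h5]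
  have h6 : B ⁅σ X, Y⁆ (σ Z) = - B ⁅X, Y⁆ Z := by
    rw [← hσXY', hσB, h3]
  -- expand
  have hexp : B ⁅X + σ X, Y - σ Y⁆ (Z - σ Z) = 4 * B ⁅X, Y⁆ Z := by
    simp only [lie_add, add_lie, lie_sub, sub_lie, map_add, map_sub,
      LinearMap.add_apply, LinearMap.sub_apply, hσbr X Y] at *
    rw [h2, h3, h4, h5, h6, h7, h8]
    ring
  -- coefficients
  have hc : (((1 - 0) / 2 : ℝ) ^ (-(1/2) : ℝ)) * (((1 - 0) / 2 : ℝ) ^ (-(1/2) : ℝ)) = 2 := by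
    rw [← Real.rpow_add (by norm_num)]
    norm_num
  have hb : (((1 - (-1)) / 2 : ℝ) ^ (-(1/2) : ℝ)) = 1 := by
    norm_num
  rw [smul_lie, lie_smul, map_smul, map_smul, map_smul]
  simp only [LinearMap.smul_apply, smul_eq_mul]
  rw [hexp, hb]
  linear_combination ((B ⁅X, Y⁆) Z / 2) * hc
end

section
/- Let z₁,…,z_q and t₁,…,t_p be vectors in g that are pairwise orthogonal with ⟨z_r,z_r⟩ = −1 and ⟨t_k,t_k⟩ = 1, spanning a subspace V on which ⟨·,·⟩ is nondegenerate, and assume ⟨[z_r,z_s],z_u⟩ = 0, ⟨[z_r,z_s],t_k⟩ = 0 and ⟨[t_k,t_i],t_j⟩ = 0 for all indices. Let c ∈ C(V) be the Clifford image of the 3-form (X,Y,Z) ↦ ⟨[X,Y],Z⟩, i.e. c = Σ_{a<b<c} ε_a ε_b ε_c ⟨[e_a,e_b],e_c⟩ e_a e_b e_c, where (e_1,…,e_{q+p}) = (z_1,…,z_q,t_1,…,t_p) is the combined orthonormal basis and ε_a = ⟨e_a,e_a⟩. Then c = −Σ_r Σ_{k<i} ⟨[t_k, z_r], t_i⟩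 t_k z_r t_i. -/
open CliffordAlgebra

/-- Let `z₁,…,z_q` and `t₁,…,t_p` be pairwise orthogonal vectors in `g` with
`⟨z_r,z_r⟩ = −1` and `⟨t_k,t_k⟩ = 1`, spanning a subspace `V` on which `⟨·,·⟩` is
nondegenerate, and assume `⟨[z_r,z_s],z_u⟩ = 0`, `⟨[z_r,z_s],t_k⟩ = 0` and
`⟨[t_k,t_i],t_j⟩ = 0` for all indices. Let `c ∈ C(V)` be the Clifford image of the 3-form
`(X,Y,Z) ↦ ⟨[X,Y],Z⟩`, i.e. `c = Σ_{a<b<d} ε_a ε_b ε_d ⟨[e_a,e_b],e_d⟩ e_a e_b e_d` for the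
combined orthonormal basis `(e) = (z_1,…,z_q,t_1,…,t_p)`. Then
`c = −Σ_r Σ_{k<i} ⟨[t_k, z_r], t_i⟩ t_k z_r t_i`. -/
theorem statement16
    {g : Type*} [LieRing g] [LieAlgebra ℝ g] [FiniteDimensional ℝ g]
    (B : LinearMap.BilinForm ℝ g)
    (hBsymm : ∀ X Y : g, B X Y = B Y X)
    (hBinv : ∀ X Y Z : g, B ⁅X, Y⁆ Z = - B Y ⁅X, Z⁆)
    {q p : ℕ} (z : Fin q → g) (t : Fin p → g)
    (hzz : ∀ r s : Fin q, r ≠ s → B (z r) (z s) = 0)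
    (htt : ∀ k i : Fin p, k ≠ i → B (t k) (t i) = 0)
    (htz : ∀ (k : Fin p) (r : Fin q), B (t k) (z r) = 0)
    (hnz : ∀ r : Fin q, B (z r) (z r) = -1)
    (hnt : ∀ k : Fin p, B (t k) (t k) = 1)
    (hzzz : ∀ r s u : Fin q, B ⁅z r, z s⁆ (z u) = 0)
    (hzzt : ∀ (r s : Fin q) (k : Fin p), B ⁅z r, z s⁆ (t k) = 0)
    (httt : ∀ k i j : Fin p, B ⁅t k, t i⁆ (t j) = 0)
    (V : Submodule ℝ g)
    (hV : V = Submodule.span ℝ (Set.range z ∪ Set.range t))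
    (hVnd : ∀ v ∈ V, (∀ w ∈ V, B v w = 0) → v = 0)
    (Q : QuadraticForm ℝ V)
    (hQ : ∀ v : V, Q v = B (v : g) (v : g) / 2)
    (htV : ∀ k : Fin p, t k ∈ V)
    (hzV : ∀ r : Fin q, z r ∈ V)
    (heV : ∀ a : Fin (q + p), Fin.append z t a ∈ V)
    (c : CliffordAlgebra Q)
    (hc : c = ∑ a : Fin (q + p), ∑ b ∈ Finset.Ioi a, ∑ d ∈ Finset.Ioi b,
      (B (Fin.append z t a) (Fin.append z t a) * B (Fin.append z t b) (Fin.append z t b)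
        * B (Fin.append z t d) (Fin.append z t d)
        * B ⁅Fin.append z t a, Fin.append z t b⁆ (Fin.append z t d)) •
      (ι Q ⟨Fin.append z t a, heV a⟩ * ι Q ⟨Fin.append z t b, heV b⟩ *
        ι Q ⟨Fin.append z t d, heV d⟩)) :
    c = - ∑ r : Fin q, ∑ k : Fin p, ∑ i ∈ Finset.Ioi k,
      B ⁅t k, z r⁆ (t i) •
        (ι Q ⟨t k, htV k⟩ * ι Q ⟨z r, hzV r⟩ * ι Q ⟨t i, htV i⟩) := by
  classical
  have hpolar : ∀ v w : V, QuadraticMap.polar Q v w = B (v : g) (w : g) := by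
    intro v w
    have hs : B (w : g) (v : g) = B (v : g) (w : g) := hBsymm _ _
    simp only [QuadraticMap.polar, hQ, Submodule.coe_add, map_add, LinearMap.add_apply]
    rw [hs]; ring
  have hanti : ∀ (k : Fin p) (r : Fin q),
      ι Q ⟨t k, htV k⟩ * ι Q ⟨z r, hzV r⟩ = -(ι Q ⟨z r, hzV r⟩ * ι Q ⟨t k, htV k⟩) := by
    intro k r
    have h := ι_mul_ι_comm (Q := Q) ⟨t k, htV k⟩ ⟨z r, hzV r⟩
    rw [hpolar] at h
    simp only [htz] at h
    simpa using h
  set F : Fin (q + p) → Fin (q + p) → Fin (q + p) → CliffordAlgebra Q := fun a b d =>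
      (B (Fin.append z t a) (Fin.append z t a) * B (Fin.append z t b) (Fin.append z t b)
        * B (Fin.append z t d) (Fin.append z t d)
        * B ⁅Fin.append z t a, Fin.append z t b⁆ (Fin.append z t d)) •
      (ι Q ⟨Fin.append z t a, heV a⟩ * ι Q ⟨Fin.append z t b, heV b⟩ *
        ι Q ⟨Fin.append z t d, heV d⟩) with hF
  have hIoi : ∀ {n : ℕ} (a : Fin n) (f : Fin n → CliffordAlgebra Q),
      ∑ x ∈ Finset.Ioi a, f x = ∑ x, if a < x then f x else 0 := by
    intro n a f
    rw [show Finset.Ioi a = Finset.univ.filter (a < ·) by ext x; simp, Finset.sum_filter]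
  have h1 : c = ∑ a : Fin (q + p), ∑ b : Fin (q + p), ∑ d : Fin (q + p),
      if a < b then (if b < d then F a b d else 0) else 0 := by
    rw [hc]
    refine Finset.sum_congr rfl fun a _ => ?_
    rw [hIoi]
    refine Finset.sum_congr rfl fun b _ => ?_
    by_cases hab : a < b <;> simp [hab, hIoi, hF]
  have h2 : c = ∑ x : Fin q ⊕ Fin p, ∑ y : Fin q ⊕ Fin p, ∑ w : Fin q ⊕ Fin p,
      if finSumFinEquiv x < finSumFinEquiv y then
        (if finSumFinEquiv y < finSumFinEquiv w then
          F (finSumFinEquiv x) (finSumFinEquiv y) (finSumFinEquiv w) else 0) else 0 := by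
    rw [h1, ← finSumFinEquiv.sum_comp]
    refine Finset.sum_congr rfl fun x _ => ?_
    rw [← finSumFinEquiv.sum_comp]
    refine Finset.sum_congr rfl fun y _ => ?_
    rw [← finSumFinEquiv.sum_comp]
  have hlt_cn : ∀ (r : Fin q) (k : Fin p), (Fin.castAdd p r : Fin (q+p)) < Fin.natAdd q k := by
    intro r k; rw [Fin.lt_def]; simp only [Fin.coe_castAdd, Fin.coe_natAdd]; omega
  have hlt_nc : ∀ (k : Fin p) (r : Fin q), ¬ (Fin.natAdd q k : Fin (q+p)) < Fin.castAdd p r := by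
    intro k r; rw [Fin.lt_def]; simp only [Fin.coe_castAdd, Fin.coe_natAdd]; omega
  have hlt_nn : ∀ (k i : Fin p), (Fin.natAdd q k : Fin (q+p)) < Fin.natAdd q i ↔ k < i := by
    intro k i
    rw [Fin.lt_def, Fin.lt_def]; simp only [Fin.coe_natAdd]; omega
  rw [h2, Fintype.sum_sum_type]
  have hzero2 : (∑ a₂ : Fin p, ∑ y : Fin q ⊕ Fin p, ∑ w : Fin q ⊕ Fin p,
      if finSumFinEquiv (Sum.inr a₂) < finSumFinEquiv y then
        (if finSumFinEquiv y < finSumFinEquiv w then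
          F (finSumFinEquiv (Sum.inr a₂)) (finSumFinEquiv y) (finSumFinEquiv w) else 0) else 0)
      = 0 := by
    refine Finset.sum_eq_zero fun k _ => ?_
    rw [Fintype.sum_sum_type]
    simp only [finSumFinEquiv_apply_left, finSumFinEquiv_apply_right]
    simp [hF, hlt_nc, Fin.append_left, Fin.append_right, httt, Fintype.sum_sum_type]
  rw [hzero2, add_zero]
  have hmain : ∀ r : Fin q, (∑ y : Fin q ⊕ Fin p, ∑ w : Fin q ⊕ Fin p,
      if finSumFinEquiv (Sum.inl r) < finSumFinEquiv y then
        (if finSumFinEquiv y < finSumFinEquiv w then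
          F (finSumFinEquiv (Sum.inl r)) (finSumFinEquiv y) (finSumFinEquiv w) else 0) else 0)
      = ∑ k : Fin p, ∑ i : Fin p, if k < i then
          (-(B ⁅z r, t k⁆ (t i))) •
            (ι Q ⟨z r, hzV r⟩ * ι Q ⟨t k, htV k⟩ * ι Q ⟨t i, htV i⟩) else 0 := by
    intro r
    rw [Fintype.sum_sum_type]
    have hz : (∑ s : Fin q, ∑ w : Fin q ⊕ Fin p,
        if finSumFinEquiv (Sum.inl r : Fin q ⊕ Fin p) < finSumFinEquiv (Sum.inl s : Fin q ⊕ Fin p) then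
          (if finSumFinEquiv (Sum.inl s : Fin q ⊕ Fin p) < finSumFinEquiv w then
            F (finSumFinEquiv (Sum.inl r)) (finSumFinEquiv (Sum.inl s)) (finSumFinEquiv w)
          else 0) else 0) = 0 := by
      refine Finset.sum_eq_zero fun s _ => ?_
      rw [Fintype.sum_sum_type]
      simp only [finSumFinEquiv_apply_left, finSumFinEquiv_apply_right]
      simp [hF, Fin.append_left, Fin.append_right, hzzz, hzzt, Fintype.sum_sum_type]
    rw [hz, zero_add]
    refine Finset.sum_congr rfl fun k _ => ?_
    rw [Fintype.sum_sum_type]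
    simp only [finSumFinEquiv_apply_left, finSumFinEquiv_apply_right]
    have hw0 : (∑ u : Fin q,
        if (Fin.castAdd p r : Fin (q+p)) < Fin.natAdd q k then
          (if (Fin.natAdd q k : Fin (q+p)) < Fin.castAdd p u then
            F (Fin.castAdd p r) (Fin.natAdd q k) (Fin.castAdd p u) else 0) else 0) = 0 := by
      refine Finset.sum_eq_zero fun u _ => ?_
      simp [hlt_nc]
    erw [hw0, zero_add]
    refine Finset.sum_congr rfl fun i _ => ?_
    erw [if_pos (hlt_cn r k)]
    simp only [hlt_nn]
    by_cases hki : k < i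
    · rw [if_pos hki, if_pos hki]
      simp only [hF, Fin.append_left, Fin.append_right, hnz, hnt]
      module
    · rw [if_neg hki, if_neg hki]
  rw [Finset.sum_congr rfl fun r _ => hmain r]
  -- now compare with RHS
  rw [← Finset.sum_neg_distrib]
  refine Finset.sum_congr rfl fun r _ => ?_
  rw [← Finset.sum_neg_distrib]
  refine Finset.sum_congr rfl fun k _ => ?_
  rw [hIoi, ← Finset.sum_neg_distrib]
  refine Finset.sum_congr rfl fun i _ => ?_
  by_cases hki : k < i
  · rw [if_pos hki, if_pos hki]
    have hlie : ⁅t k, z r⁆ = -⁅z r, t k⁆ := neg_eq_iff_eq_neg.mp (lie_skew (z r) (t k))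
    rw [hlie, map_neg, LinearMap.neg_apply, hanti k r]
    simp only [neg_mul, smul_neg, neg_smul, neg_neg]
  · rw [if_neg hki, if_neg hki, neg_zero]
end

section
/- Assume ⟨·,·⟩ restricted to l∩h is nondegenerate and g = h + l (every element of g is a sum of an element of h and an element of l). Let q_l := {X ∈ l : ⟨X, Y⟩ = 0 for all Y ∈ l∩h}. Then the map p⁻ : q_l → q defined by p⁻(X) = (X − σX)/2 is a linear isomorphism of q_l onto q. -/
/-- Assume `⟨·,·⟩` restricted to `l∩h` is nondegenerate and `g = h + l`.
With `q_l = {X ∈ l : ⟨X,Y⟩ = 0 for all Y ∈ l∩h}`, the map `p⁻ : q_l → q`,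
`p⁻(X) = (X − σX)/2`, is a linear isomorphism of `q_l` onto `q = {X : σX = −X}`
(here `h = {X : σX = X}`): it maps `q_l` into `q`, is injective on `q_l`, and is onto `q`. -/
theorem statement18
    {g : Type*} [LieRing g] [LieAlgebra ℝ g] [FiniteDimensional ℝ g]
    (B : LinearMap.BilinForm ℝ g)
    (hBsymm : ∀ X Y : g, B X Y = B Y X)
    (hBinv : ∀ X Y Z : g, B ⁅X, Y⁆ Z = - B Y ⁅X, Z⁆)
    (σ : g →ₗ[ℝ] g)
    (hσbr : ∀ X Y : g, σ ⁅X, Y⁆ = ⁅σ X, σ Y⁆)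
    (hσinv : ∀ X : g, σ (σ X) = X)
    (hσB : ∀ X Y : g, B (σ X) (σ Y) = B X Y)
    (l : LieSubalgebra ℝ g)
    (hnd : ∀ X : g, X ∈ l → σ X = X →
      (∀ Y : g, Y ∈ l → σ Y = Y → B X Y = 0) → X = 0)
    (hdec : ∀ W : g, ∃ A X : g, σ A = A ∧ X ∈ l ∧ W = A + X) :
    (∀ X : g, (X ∈ l ∧ ∀ Y : g, Y ∈ l → σ Y = Y → B X Y = 0) →
      σ ((1/2 : ℝ) • (X - σ X)) = -((1/2 : ℝ) • (X - σ X))) ∧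
    (∀ X X' : g,
      (X ∈ l ∧ ∀ Y : g, Y ∈ l → σ Y = Y → B X Y = 0) →
      (X' ∈ l ∧ ∀ Y : g, Y ∈ l → σ Y = Y → B X' Y = 0) →
      (1/2 : ℝ) • (X - σ X) = (1/2 : ℝ) • (X' - σ X') → X = X') ∧
    (∀ W : g, σ W = -W →
      ∃ X : g, (X ∈ l ∧ ∀ Y : g, Y ∈ l → σ Y = Y → B X Y = 0) ∧
        (1/2 : ℝ) • (X - σ X) = W) := by
  refine ⟨?_, ?_, ?_⟩
  · intro X _
    rw [map_smul, map_sub, hσinv, smul_sub, smul_sub]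
    abel
  · intro X X' ⟨hXl, hXB⟩ ⟨hX'l, hX'B⟩ heq
    have h1 : X - σ X = X' - σ X' :=
      smul_right_injective g (by norm_num : (1/2 : ℝ) ≠ 0) heq
    have h2 : X - X' = σ X - σ X' := sub_eq_sub_iff_sub_eq_sub.mp h1
    have hZσ : σ (X - X') = X - X' := by rw [map_sub, ← h2]
    have hZ0 : X - X' = 0 := by
      refine hnd _ (l.sub_mem hXl hX'l) hZσ fun Y hYl hYσ => ?_
      rw [map_sub, LinearMap.sub_apply, hXB Y hYl hYσ, hX'B Y hYl hYσ, sub_zero]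
    exact sub_eq_zero.mp hZ0
  · intro W hW
    obtain ⟨A, X, hA, hXl, hWAX⟩ := hdec W
    -- S = l ∩ h as a submodule
    set S : Submodule ℝ g := l.toSubmodule ⊓ LinearMap.ker (σ - LinearMap.id) with hS
    have hmemS : ∀ Z : g, Z ∈ S ↔ Z ∈ l ∧ σ Z = Z := by
      intro Z
      simp [hS, Submodule.mem_inf, LinearMap.mem_ker, LinearMap.sub_apply, sub_eq_zero]
    -- restriction of B to S is nondegenerate
    have hBS : (B.restrict S).Nondegenerate := by
      refine LinearMap.BilinForm.Nondegenerate.ofSeparatingLeft ?_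
      intro x hx
      have hx' : (x : g) = 0 := by
        apply hnd _ ((hmemS x).mp x.2).1 ((hmemS x).mp x.2).2
        intro Y hYl hYσ
        exact hx ⟨Y, (hmemS Y).mpr ⟨hYl, hYσ⟩⟩
      exact Subtype.ext hx'
    -- represent the functional y ↦ B X y on S by some C ∈ S
    set f : Module.Dual ℝ S := (B X).comp S.subtype with hf
    set C : S := ((B.restrict S).toDual hBS).symm f with hC
    have hCrep : ∀ y : S, B (C : g) (y : g) = B X (y : g) := fun y =>
      LinearMap.BilinForm.apply_toDual_symm_apply (B := B.restrict S) (hB := hBS) f y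
    obtain ⟨hCl, hCσ⟩ := (hmemS C).mp C.2
    refine ⟨X - C, ⟨l.sub_mem hXl hCl, ?_⟩, ?_⟩
    · intro Y hYl hYσ
      rw [map_sub, LinearMap.sub_apply, hCrep ⟨Y, (hmemS Y).mpr ⟨hYl, hYσ⟩⟩, sub_self]
    · have hX : X = W - A := by rw [hWAX]; abel
      have hσX : σ X = -W - A := by rw [hX, map_sub, hW, hA]
      rw [map_sub, hCσ, hσX]
      have h1 : X - (C : g) - (-W - A - (C : g)) = W + W := by rw [hX]; abel
      rw [h1, ← two_smul ℝ W, smul_smul]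
      norm_num
end

section
/- Assume ⟨·,·⟩ is nondegenerate on g and g = l + σ(l) (every element of g is of the form Y + σ(Z) with Y, Z ∈ l). Then l(1) = l∩h and l(−1) = l∩q. -/
/-- Assume `⟨·,·⟩` is nondegenerate on `g` and `g = l + σ(l)`.
Then `l(1) = l∩h` and `l(−1) = l∩q`, where `h = {X : σX = X}` and `q = {X : σX = −X}`. -/
theorem statement19
    {g : Type*} [LieRing g] [LieAlgebra ℝ g] [FiniteDimensional ℝ g]
    (B : LinearMap.BilinForm ℝ g)
    (hBsymm : ∀ X Y : g, B X Y = B Y X)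
    (hBinv : ∀ X Y Z : g, B ⁅X, Y⁆ Z = - B Y ⁅X, Z⁆)
    (σ : g →ₗ[ℝ] g)
    (hσbr : ∀ X Y : g, σ ⁅X, Y⁆ = ⁅σ X, σ Y⁆)
    (hσinv : ∀ X : g, σ (σ X) = X)
    (hσB : ∀ X Y : g, B (σ X) (σ Y) = B X Y)
    (l : LieSubalgebra ℝ g)
    (hBnondeg : ∀ X : g, (∀ Y : g, B X Y = 0) → X = 0)
    (hdec : ∀ X : g, ∃ Y ∈ l, ∃ Z ∈ l, X = Y + σ Z) :
    (∀ X : g, (X ∈ l ∧ ∀ Y ∈ l, B (σ X) Y = 1 * B X Y) ↔ (X ∈ l ∧ σ X = X)) ∧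
    (∀ X : g, (X ∈ l ∧ ∀ Y ∈ l, B (σ X) Y = (-1) * B X Y) ↔ (X ∈ l ∧ σ X = -X)) := by
  have key : ∀ ν : ℝ, ν * ν = 1 → ∀ X : g, X ∈ l →
      (∀ Y ∈ l, B (σ X) Y = ν * B X Y) → σ X = ν • X := by
    intro ν hν X hX hB
    have hW : ∀ U : g, B (σ X - ν • X) U = 0 := by
      intro U
      obtain ⟨Y, hY, Z, hZ, rfl⟩ := hdec U
      have hσW : σ (σ X - ν • X) = (-ν) • (σ X - ν • X) := by
        rw [map_sub, map_smul, hσinv, smul_sub, smul_smul, neg_mul, hν,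
          neg_smul, neg_smul, one_smul, sub_neg_eq_add]
        abel
      have h1 : B (σ X - ν • X) Y = 0 := by
        rw [map_sub, map_smul, LinearMap.sub_apply, LinearMap.smul_apply, smul_eq_mul]
        linear_combination hB Y hY
      have h2 : B (σ X - ν • X) (σ Z) = 0 := by
        have e1 : B (σ X - ν • X) (σ Z) = B (σ (σ X - ν • X)) Z := by
          rw [← hσB (σ X - ν • X) (σ Z), hσinv]
        rw [e1, hσW, map_smul, LinearMap.smul_apply, smul_eq_mul, map_sub, map_smul,
          LinearMap.sub_apply, LinearMap.smul_apply, smul_eq_mul]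
        linear_combination (-ν) * hB Z hZ
      rw [map_add, h1, h2, add_zero]
    have h0 : σ X - ν • X = 0 := hBnondeg _ hW
    have := sub_eq_zero.mp h0
    simpa using this
  constructor
  · intro X
    constructor
    · rintro ⟨hX, hb⟩
      refine ⟨hX, ?_⟩
      have := key 1 (by norm_num) X hX hb
      simpa using this
    · rintro ⟨hX, hb⟩
      exact ⟨hX, fun Y _ => by rw [hb, one_mul]⟩
  · intro X
    constructor
    · rintro ⟨hX, hb⟩
      refine ⟨hX, ?_⟩
      have := key (-1) (by norm_num) X hX hb
      simpa using this
    · rintro ⟨hX, hb⟩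
      exact ⟨hX, fun Y _ => by rw [hb]; simp⟩
end
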